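/- CDH extraction in the proof of Theorem 2: Let a, b, κ, β, x, h, h' : ZMod q with h ≠ h', x ≠ 0 and β ≠ 0, let Q_s : G₁ be arbitrary, and set P₀ = κ•P, U = β•(a•P), Pk_s = x•(b•P). If V, V' : G₁ satisfy e(V - V', P) = e((h - h')•Pk_s, U) · e((h - h')•Q_s, P₀), then (a*b)•P = (x*β)⁻¹•((h - h')⁻¹•(V - V') - κ•Q_s); i.e. a challenger knowing the master key κ can compute the CDH solution a·b·P from the two forged signatures. -/

import Mathlib

theorem clring_cdh_extraction_theorem2
    {q : ℕ} [Fact (Nat.Prime q)]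
    {G₁ : Type*} [AddCommGroup G₁] [Module (ZMod q) G₁]
    {G₂ : Type*} [CommGroup G₂]
    (P : G₁) (e : G₁ → G₁ → G₂)
    (e_add_left : ∀ x y z : G₁, e (x + y) z = e x z * e y z)
    (e_add_right : ∀ x y z : G₁, e x (y + z) = e x y * e x z)
    (e_smul : ∀ (a : ZMod q) (x y : G₁), e (a • x) y = e x (a • y))
    (e_nd : ∀ x : G₁, e x P = 1 → x = 0)
    (a b κ β x h h' : ZMod q) (hne : h ≠ h') (hx : x ≠ 0) (hβ : β ≠ 0)
    (Q_s P₀ U Pk_s : G₁)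
    (hP₀ : P₀ = κ • P) (hU : U = β • (a • P)) (hPk : Pk_s = x • (b • P))
    (V V' : G₁)
    (heq : e (V - V') P = e ((h - h') • Pk_s) U * e ((h - h') • Q_s) P₀) :
    (a * b) • P = (x * β)⁻¹ • ((h - h')⁻¹ • (V - V') - κ • Q_s) := by
  have e_zero : ∀ z, e 0 z = 1 := by
    intro z
    have := e_add_left 0 0 z
    simp only [add_zero] at this
    exact right_eq_mul.mp this
  have e_neg : ∀ y z, e (-y) z = (e y z)⁻¹ := by
    intro y z
    have : e (-y) z * e y z = 1 := by
      rw [← e_add_left, neg_add_cancel, e_zero]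
    exact eq_inv_of_mul_eq_one_left this
  have h1 : e ((h - h') • Pk_s) U = e ((a * (β * ((h - h') * (x * b)))) • P) P := by
    rw [hPk, hU, ← e_smul β, ← e_smul a, smul_smul, smul_smul, smul_smul, smul_smul]
    ring_nf
  have h2 : e ((h - h') • Q_s) P₀ = e ((κ * (h - h')) • Q_s) P := by
    rw [hP₀, ← e_smul κ, smul_smul]
  have key : e (V - V' - ((a * (β * ((h - h') * (x * b)))) • P + (κ * (h - h')) • Q_s)) P = 1 := by
    rw [sub_eq_add_neg, e_add_left, e_neg, e_add_left, heq, h1, h2]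
    group
  have hd := e_nd _ key
  rw [sub_eq_zero] at hd
  rw [hd]
  have hsub : h - h' ≠ 0 := sub_ne_zero.mpr hne
  have hxβ : x * β ≠ 0 := mul_ne_zero hx hβ
  match_scalars
  · field_simp
  · field_simp
    simp
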